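/- Tail estimate for periodized decaying functions: let d ≥ 1, j ≥ 3, and h : ℤ^d → ℝ with |h(ℓ)| ≤ C₀(1+|ℓ|)^{2−d−j}. Then for all N ≥ 1 and all ℓ ∈ ℤ^d with |ℓ|_∞ ≤ N, |∑_{z∈ℤ^d, z≠0} h(ℓ + 2Nz)| ≤ C N^{2−d−j}, with C depending only on d, j, C₀. -/

import Mathlib

set_option maxHeartbeats 1000000


open scoped BigOperators

noncomputable def toE {d : ℕ} (x : Fin d → ℤ) : EuclideanSpace ℝ (Fin d) :=
  WithLp.toLp 2 (fun i => (x i : ℝ))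

lemma euclid_coord_le {d : ℕ} (x : EuclideanSpace ℝ (Fin d)) (i : Fin d) : |x i| ≤ ‖x‖ := by
  rw [EuclideanSpace.norm_eq]
  have h1 : |x i| = Real.sqrt (‖x i‖ ^ 2) := by
    rw [Real.sqrt_sq_eq_abs, Real.norm_eq_abs, abs_abs]
  rw [h1]
  apply Real.sqrt_le_sqrt
  exact Finset.single_le_sum (f := fun j => ‖x j‖ ^ 2) (fun j _ => sq_nonneg _)
    (Finset.mem_univ i)

lemma euclid_norm_le {d : ℕ} (x y : EuclideanSpace ℝ (Fin d)) (h : ∀ i, |x i| ≤ |y i|) :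
    ‖x‖ ≤ ‖y‖ := by
  rw [EuclideanSpace.norm_eq, EuclideanSpace.norm_eq]
  apply Real.sqrt_le_sqrt
  apply Finset.sum_le_sum
  intro i _
  rw [Real.norm_eq_abs, Real.norm_eq_abs, sq_abs, sq_abs, ← sq_abs (x i), ← sq_abs (y i)]
  exact pow_le_pow_left₀ (abs_nonneg _) (h i) 2

lemma summable_pi_prod {g : ℤ → ℝ} (hg : Summable g) (hg0 : ∀ k, 0 ≤ g k) (n : ℕ) :
    Summable fun z : Fin n → ℤ => ∏ i, g (z i) := by
  induction n with
  | zero =>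
      have he : (fun z : Fin 0 → ℤ => ∏ i, g (z i)) = fun _ => 1 := by
        funext z; simp
      rw [he]; exact Summable.of_finite
  | succ n ih =>
      have hmul : Summable fun p : ℤ × (Fin n → ℤ) => g p.1 * ∏ i, g (p.2 i) := by
        apply Summable.mul_of_nonneg hg ih
        · exact hg0
        · exact fun z => Finset.prod_nonneg fun i _ => hg0 _
      apply (Equiv.summable_iff (Fin.consEquiv (fun _ : Fin (n + 1) => ℤ))).mp
      refine hmul.congr fun x => ?_
      simp [Fin.consEquiv, Fin.prod_univ_succ]

/-- tail estimate for periodized decaying functions: for `j ≥ 3` and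
`|h(ℓ)| ≤ C₀(1+|ℓ|)^{2−d−j}`, one has `|∑_{z≠0} h(ℓ+2Nz)| ≤ C N^{2−d−j}` for all
`N ≥ 1` and `|ℓ|_∞ ≤ N`, with `C = C(d,j,C₀)`. -/
theorem stmt14 (d j : ℕ) (hd : 1 ≤ d) (hj : 3 ≤ j) (C₀ : ℝ) (hC₀ : 0 ≤ C₀) :
    ∃ C : ℝ, 0 < C ∧ ∀ N : ℕ, 1 ≤ N → ∀ h : (Fin d → ℤ) → ℝ,
      (∀ ℓ, |h ℓ| ≤ C₀ * (1 + ‖toE ℓ‖) ^ ((2 : ℝ) - d - j)) →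
      ∀ ℓ : Fin d → ℤ, (∀ i, |ℓ i| ≤ (N : ℤ)) →
        |∑' z : {z : Fin d → ℤ // z ≠ 0}, h (ℓ + (2 * (N : ℤ)) • z.1)|
          ≤ C * (N : ℝ) ^ ((2 : ℝ) - d - j) := by
  set s : ℝ := (2 : ℝ) - d - j with hs_def
  have hd1 : (1 : ℝ) ≤ (d : ℝ) := by exact_mod_cast hd
  have hj3 : (3 : ℝ) ≤ (j : ℝ) := by exact_mod_cast hj
  have hdpos : (0 : ℝ) < (d : ℝ) := by linarith
  have hds : (d : ℝ) + 1 ≤ -s := by simp only [hs_def]; linarith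
  set p : ℝ := -s / d with hp_def
  have hp1 : 1 < p := by
    rw [hp_def, lt_div_iff₀ hdpos]
    linarith
  have hp0 : 0 < p := by linarith
  set g : ℤ → ℝ := fun k => (max 1 |(k : ℝ)|) ^ (-p) with hg_def
  have hg0 : ∀ k, 0 ≤ g k := fun k => Real.rpow_nonneg (le_trans zero_le_one (le_max_left _ _)) _
  have hg : Summable g := by
    have h1 : Summable fun k : ℤ => |(k : ℝ)| ^ (-p) := Real.summable_abs_int_rpow hp1
    have h2 : Summable fun k : ℤ => if k = 0 then (1 : ℝ) else 0 := by
      apply summable_of_ne_finset_zero (s := {(0 : ℤ)})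
      intro b hb
      simp only [Finset.mem_singleton] at hb
      simp [hb]
    refine (h1.add h2).congr fun k => ?_
    by_cases hk : k = 0
    · subst hk
      simp [hg_def, Real.zero_rpow (by linarith : -p ≠ 0)]
    · have h1k : (1 : ℝ) ≤ |(k : ℝ)| := by
        rw [← Int.cast_abs]
        exact_mod_cast Int.one_le_abs hk
      simp [hg_def, hk, max_eq_right h1k]
  -- key comparison: for z ≠ 0, ‖toE z‖ ^ s ≤ ∏ i, g (z i)
  have hkey : ∀ z : Fin d → ℤ, z ≠ 0 → ‖toE z‖ ^ s ≤ ∏ i, g (z i) := by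
    intro z hz
    have hnz : ∃ i, z i ≠ 0 := by
      by_contra hcon
      push_neg at hcon
      exact hz (funext fun i => hcon i)
    obtain ⟨i0, hi0⟩ := hnz
    have h1 : (1 : ℝ) ≤ ‖toE z‖ := by
      refine le_trans ?_ (euclid_coord_le (toE z) i0)
      show (1 : ℝ) ≤ |((z i0 : ℤ) : ℝ)|
      rw [← Int.cast_abs]
      exact_mod_cast Int.one_le_abs hi0
    have hcoord : ∀ i, max 1 |((z i : ℤ) : ℝ)| ≤ ‖toE z‖ := by
      intro i
      exact max_le h1 (euclid_coord_le (toE z) i)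
    have hprod_le : ∏ i, max 1 |((z i : ℤ) : ℝ)| ≤ ‖toE z‖ ^ (d : ℕ) := by
      calc ∏ i, max 1 |((z i : ℤ) : ℝ)| ≤ ∏ _i : Fin d, ‖toE z‖ :=
            Finset.prod_le_prod (fun i _ => le_trans zero_le_one (le_max_left _ _))
              (fun i _ => hcoord i)
        _ = ‖toE z‖ ^ (d : ℕ) := by simp
    have hprod_pos : (0 : ℝ) < ∏ i, max 1 |((z i : ℤ) : ℝ)| :=
      Finset.prod_pos fun i _ => lt_of_lt_of_le zero_lt_one (le_max_left _ _)
    have step1 : (‖toE z‖ ^ (d : ℕ)) ^ (-p) ≤ (∏ i, max 1 |((z i : ℤ) : ℝ)|) ^ (-p) :=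
      Real.rpow_le_rpow_of_nonpos hprod_pos hprod_le (by linarith)
    have step2 : (∏ i, max 1 |((z i : ℤ) : ℝ)|) ^ (-p) = ∏ i, g (z i) := by
      rw [← Real.finset_prod_rpow _ _ (fun i _ => le_trans zero_le_one (le_max_left _ _))]
    have step3 : (‖toE z‖ ^ (d : ℕ)) ^ (-p) = ‖toE z‖ ^ s := by
      rw [← Real.rpow_natCast ‖toE z‖ d, ← Real.rpow_mul (by linarith)]
      congr 1
      rw [hp_def]
      field_simp
    rw [← step3, ← step2]
    exact step1
  -- the constant
  set S : ℝ := ∑' z : {z : Fin d → ℤ // z ≠ 0}, ∏ i, g (z.1 i) with hS_def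
  have hF : Summable fun z : Fin d → ℤ => ∏ i, g (z i) := summable_pi_prod hg hg0 d
  have hFsub : Summable fun z : {z : Fin d → ℤ // z ≠ 0} => ∏ i, g (z.1 i) :=
    hF.comp_injective Subtype.coe_injective
  have hS0 : 0 ≤ S := tsum_nonneg fun z => Finset.prod_nonneg fun i _ => hg0 _
  refine ⟨C₀ * S + 1, by positivity, ?_⟩
  intro N hN h hh ℓ hℓ
  have hN1 : (1 : ℝ) ≤ (N : ℝ) := by exact_mod_cast hN
  have hNpos : (0 : ℝ) < (N : ℝ) := by linarith
  have hNs : (0 : ℝ) < (N : ℝ) ^ s := Real.rpow_pos_of_pos hNpos _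
  -- per-term bound
  have hterm : ∀ z : {z : Fin d → ℤ // z ≠ 0},
      |h (ℓ + (2 * (N : ℤ)) • z.1)| ≤ (C₀ * (N : ℝ) ^ s) * ∏ i, g (z.1 i) := by
    intro z
    obtain ⟨z, hz⟩ := z
    have hnz : ∃ i, z i ≠ 0 := by
      by_contra hcon
      push_neg at hcon
      exact hz (funext fun i => hcon i)
    obtain ⟨i0, hi0⟩ := hnz
    have hz1 : (1 : ℝ) ≤ ‖toE z‖ := by
      refine le_trans ?_ (euclid_coord_le (toE z) i0)
      show (1 : ℝ) ≤ |((z i0 : ℤ) : ℝ)|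
      rw [← Int.cast_abs]
      exact_mod_cast Int.one_le_abs hi0
    -- coordinatewise: |N * z i| ≤ |ℓ i + 2N z i|
    have hco : ∀ i, |(N : ℤ) * z i| ≤ |ℓ i + (2 * (N : ℤ)) * z i| := by
      intro i
      rcases eq_or_ne (z i) 0 with h0 | h0
      · simp [h0]
      · have h1 : (1 : ℤ) ≤ |z i| := Int.one_le_abs h0
        have h2 := abs_sub_abs_le_abs_sub ((2 * (N : ℤ)) * z i) (-(ℓ i))
        simp only [sub_neg_eq_add, abs_neg] at h2
        have hNn : (0 : ℤ) ≤ (N : ℤ) := Int.natCast_nonneg N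
        have h3 : |(2 * (N : ℤ)) * z i| = 2 * (N : ℤ) * |z i| := by
          rw [abs_mul]
          congr 1
          exact abs_of_nonneg (by positivity)
        have h4 : |(N : ℤ) * z i| = (N : ℤ) * |z i| := by
          rw [abs_mul, abs_of_nonneg hNn]
        have h5 := hℓ i
        have h6 : |ℓ i + 2 * (N : ℤ) * z i| = |2 * (N : ℤ) * z i + ℓ i| := by
          rw [add_comm]
        rw [h4, h6]
        nlinarith [abs_nonneg (ℓ i)]
    -- norm bound: N * ‖toE z‖ ≤ ‖toE (ℓ + 2N z)‖
    have hnormle : (N : ℝ) * ‖toE z‖ ≤ ‖toE (ℓ + (2 * (N : ℤ)) • z)‖ := by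
      have heq : (N : ℝ) * ‖toE z‖ = ‖toE ((N : ℤ) • z)‖ := by
        have : toE ((N : ℤ) • z) = ((N : ℝ)) • toE z := by
          ext i
          show ((((N : ℤ) • z) i : ℤ) : ℝ) = (N : ℝ) * ((z i : ℤ) : ℝ)
          rw [Pi.smul_apply, smul_eq_mul]
          push_cast
          ring
        rw [this, norm_smul, Real.norm_eq_abs, abs_of_nonneg hNpos.le]
      rw [heq]
      apply euclid_norm_le
      intro i
      show |((((N : ℤ) • z) i : ℤ) : ℝ)| ≤ |(((ℓ + (2 * (N : ℤ)) • z) i : ℤ) : ℝ)|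
      rw [← Int.cast_abs, ← Int.cast_abs]
      exact_mod_cast hco i
    have hNz_pos : (0 : ℝ) < (N : ℝ) * ‖toE z‖ := by positivity
    have hb1 : (1 + ‖toE (ℓ + (2 * (N : ℤ)) • z)‖) ^ s ≤ ((N : ℝ) * ‖toE z‖) ^ s := by
      apply Real.rpow_le_rpow_of_nonpos hNz_pos
      · calc (N : ℝ) * ‖toE z‖ ≤ ‖toE (ℓ + (2 * (N : ℤ)) • z)‖ := hnormle
          _ ≤ 1 + ‖toE (ℓ + (2 * (N : ℤ)) • z)‖ := by linarith [norm_nonneg (toE (ℓ + (2 * (N : ℤ)) • z))]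
      · simp only [hs_def]; linarith
    have hb2 : ((N : ℝ) * ‖toE z‖) ^ s = (N : ℝ) ^ s * ‖toE z‖ ^ s :=
      Real.mul_rpow hNpos.le (by linarith)
    calc |h (ℓ + (2 * (N : ℤ)) • z)|
        ≤ C₀ * (1 + ‖toE (ℓ + (2 * (N : ℤ)) • z)‖) ^ s := hh _
      _ ≤ C₀ * ((N : ℝ) ^ s * ‖toE z‖ ^ s) := by
          rw [← hb2]
          exact mul_le_mul_of_nonneg_left hb1 hC₀
      _ ≤ C₀ * ((N : ℝ) ^ s * ∏ i, g (z i)) := by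
          apply mul_le_mul_of_nonneg_left _ hC₀
          exact mul_le_mul_of_nonneg_left (hkey z hz) hNs.le
      _ = (C₀ * (N : ℝ) ^ s) * ∏ i, g (z i) := by ring
  -- summability
  have hBsum : Summable fun z : {z : Fin d → ℤ // z ≠ 0} =>
      (C₀ * (N : ℝ) ^ s) * ∏ i, g (z.1 i) := hFsub.mul_left _
  have hfsum : Summable fun z : {z : Fin d → ℤ // z ≠ 0} => h (ℓ + (2 * (N : ℤ)) • z.1) := by
    apply Summable.of_norm_bounded hBsum
    intro z
    rw [Real.norm_eq_abs]
    exact hterm z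
  have habs : Summable fun z : {z : Fin d → ℤ // z ≠ 0} => |h (ℓ + (2 * (N : ℤ)) • z.1)| :=
    hfsum.abs
  calc |∑' z : {z : Fin d → ℤ // z ≠ 0}, h (ℓ + (2 * (N : ℤ)) • z.1)|
      ≤ ∑' z : {z : Fin d → ℤ // z ≠ 0}, |h (ℓ + (2 * (N : ℤ)) • z.1)| := by
        have h1 := norm_tsum_le_tsum_norm
          (f := fun z : {z : Fin d → ℤ // z ≠ 0} => h (ℓ + (2 * (N : ℤ)) • z.1))
          (by simpa only [Real.norm_eq_abs] using habs)
        simpa only [Real.norm_eq_abs] using h1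
    _ ≤ ∑' z : {z : Fin d → ℤ // z ≠ 0}, (C₀ * (N : ℝ) ^ s) * ∏ i, g (z.1 i) :=
        Summable.tsum_le_tsum hterm habs hBsum
    _ = (C₀ * (N : ℝ) ^ s) * S := by rw [tsum_mul_left]
    _ = (C₀ * S) * (N : ℝ) ^ s := by ring
    _ ≤ (C₀ * S + 1) * (N : ℝ) ^ s := by nlinarith
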